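/- Let θ be the dihedral angle of a regular tetrahedron (so cos θ = 1/3). Then the supplement π - θ is an irrational multiple of π, and hence the rotation of ℝ³ about any line through angle π - θ has infinite order. -/

import Mathlib

noncomputable section
open Real

abbrev E3 := EuclideanSpace ℝ (Fin 3)

def cross3 (u v : E3) : E3 :=
  (EuclideanSpace.equiv (Fin 3) ℝ).symm
    ![u 1 * v 2 - u 2 * v 1, u 2 * v 0 - u 0 * v 2, u 0 * v 1 - u 1 * v 0]

/-- Rotation of `ℝ³` through `θ` radians about the line through `p` with (unit)
direction `u`, given by the Rodrigues formula. -/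
def rot3 (p u : E3) (θ : ℝ) (x : E3) : E3 :=
  p + Real.cos θ • (x - p) + Real.sin θ • cross3 u (x - p)
    + ((1 - Real.cos θ) * (inner ℝ u (x - p) : ℝ)) • u

/-- The line through `p` with direction `u`. -/
def lineThrough (p u : E3) : Set E3 := {x | ∃ t : ℝ, x = p + t • u}

/-! ### Auxiliary lemmas: irrationality of `arccos (1/3) / π` -/

/-- integer sequence `3^n cos (n arccos (1/3))` -/
def tetra : ℕ → ℤ
  | 0 => 1
  | 1 => 1
  | (n+2) => 2 * tetra (n+1) - 9 * tetra n

lemma tetra_cos : ∀ n : ℕ, (tetra n : ℝ) = 3 ^ n * Real.cos (n * Real.arccos (1/3))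
  | 0 => by simp [tetra]
  | 1 => by
      have hc : Real.cos (Real.arccos (1/3)) = 1/3 :=
        Real.cos_arccos (by norm_num) (by norm_num)
      norm_num [tetra, hc]
  | (n+2) => by
      have h1 := tetra_cos (n+1)
      have h0 := tetra_cos n
      set θ := Real.arccos (1/3) with hθ
      have hc : Real.cos θ = 1/3 :=
        Real.cos_arccos (by norm_num) (by norm_num)
      have e1 : ((n:ℝ)+2) * θ = ((n:ℝ)+1) * θ + θ := by ring
      have e2 : (n:ℝ) * θ = ((n:ℝ)+1) * θ - θ := by ring
      have key : Real.cos (((n:ℝ)+2) * θ) =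
          2 * Real.cos θ * Real.cos (((n:ℝ)+1)*θ) - Real.cos ((n:ℝ)*θ) := by
        rw [e1, e2, Real.cos_add, Real.cos_sub]; ring
      have : (tetra (n+2) : ℝ) = 2 * (tetra (n+1) : ℝ) - 9 * (tetra n : ℝ) := by
        rw [show tetra (n+2) = 2 * tetra (n+1) - 9 * tetra n from rfl]; push_cast; ring
      rw [this, h1, h0]
      push_cast
      rw [key, hc]
      ring

lemma tetra_not_dvd : ∀ n : ℕ, ¬ (3 : ℤ) ∣ tetra (n+1) := by
  intro n
  induction n with
  | zero => decide
  | succ m ih =>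
      intro h
      apply ih
      have h9 : (3:ℤ) ∣ 9 * tetra m := ⟨3 * tetra m, by ring⟩
      have h2 : (3:ℤ) ∣ 2 * tetra (m+1) := by
        have hh := dvd_add h h9
        rwa [show tetra (m+2) = 2 * tetra (m+1) - 9 * tetra m from rfl,
          sub_add_cancel] at hh
      rcases (Int.prime_three.dvd_mul).1 h2 with h | h
      · norm_num at h
      · exact h

lemma irr_aux : Irrational (Real.arccos (1/3) / π) := by
  set θ := Real.arccos (1/3) with hθ
  rw [Irrational]
  intro ⟨q, hq⟩
  have hπ : (π:ℝ) ≠ 0 := Real.pi_ne_zero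
  have hθeq : θ = (q : ℝ) * π := by
    field_simp at hq; linarith [hq]
  have hden : ((q.den : ℝ)) * (q : ℝ) = (q.num : ℝ) := by
    rw [Rat.cast_def]
    field_simp
  have hcos : Real.cos ((2 * q.den : ℕ) * θ) = 1 := by
    have : ((2 * q.den : ℕ) : ℝ) * θ = (q.num : ℝ) * (2 * π) := by
      rw [hθeq]; push_cast; linear_combination (2*π) * hden
    rw [this, Real.cos_int_mul_two_pi]
  have := tetra_cos (2 * q.den)
  rw [hcos, mul_one] at this
  have hdvd : (3:ℤ) ∣ tetra (2 * q.den) := by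
    have h3 : (tetra (2 * q.den) : ℝ) = ((3 ^ (2 * q.den) : ℤ) : ℝ) := by push_cast; exact this
    have : tetra (2 * q.den) = 3 ^ (2 * q.den) := by exact_mod_cast h3
    rw [this]
    exact dvd_pow_self 3 (by positivity)
  obtain ⟨m, hm⟩ : ∃ m, 2 * q.den = m + 1 := ⟨2 * q.den - 1, by have := q.den_pos; omega⟩
  rw [hm] at hdvd
  exact tetra_not_dvd m hdvd

lemma irr_main : Irrational ((π - Real.arccos (1/3)) / π) := by
  have h := (irr_aux.ratCast_sub (q := 1))
  have : (π - Real.arccos (1/3)) / π = ((1:ℚ):ℝ) - Real.arccos (1/3) / π := by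
    push_cast
    field_simp
  rwa [this]

/-! ### Auxiliary lemmas: the cross product and iterated rotations -/

lemma cross3_apply0 (u v : E3) : cross3 u v 0 = u 1 * v 2 - u 2 * v 1 := rfl
lemma cross3_apply1 (u v : E3) : cross3 u v 1 = u 2 * v 0 - u 0 * v 2 := rfl
lemma cross3_apply2 (u v : E3) : cross3 u v 2 = u 0 * v 1 - u 1 * v 0 := rfl

lemma inner_E3 (a b : E3) : (inner ℝ a b : ℝ) = a 0 * b 0 + a 1 * b 1 + a 2 * b 2 := by
  simp [PiLp.inner_apply, Fin.sum_univ_three, RCLike.inner_apply, mul_comm]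

lemma norm_E3 (u : E3) (hu : ‖u‖ = 1) : u 0 ^ 2 + u 1 ^ 2 + u 2 ^ 2 = 1 := by
  have h : (inner ℝ u u : ℝ) = 1 := by
    rw [real_inner_self_eq_norm_sq, hu]; norm_num
  rw [inner_E3] at h
  nlinarith [h]

lemma cross3_lin (u x y : E3) (a b : ℝ) :
    cross3 u (a • x + b • y) = a • cross3 u x + b • cross3 u y := by
  ext i
  fin_cases i <;>
    simp [cross3_apply0, cross3_apply1, cross3_apply2, PiLp.add_apply, PiLp.smul_apply,
      smul_eq_mul] <;> ring

lemma cross3_cross3 (u w : E3) (hu : ‖u‖ = 1) (hw : (inner ℝ u w : ℝ) = 0) :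
    cross3 u (cross3 u w) = -w := by
  have hn := norm_E3 u hu
  rw [inner_E3] at hw
  have e0 : cross3 u (cross3 u w) 0 = (-w) 0 := by
    rw [cross3_apply0, cross3_apply1, cross3_apply2, PiLp.neg_apply]
    linear_combination (u 0) * hw - (w 0) * hn
  have e1 : cross3 u (cross3 u w) 1 = (-w) 1 := by
    rw [cross3_apply1, cross3_apply2, cross3_apply0, PiLp.neg_apply]
    linear_combination (u 1) * hw - (w 1) * hn
  have e2 : cross3 u (cross3 u w) 2 = (-w) 2 := by
    rw [cross3_apply2, cross3_apply0, cross3_apply1, PiLp.neg_apply]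
    linear_combination (u 2) * hw - (w 2) * hn
  ext i
  fin_cases i
  exacts [e0, e1, e2]

lemma inner_u_cross3 (u w : E3) : (inner ℝ u (cross3 u w) : ℝ) = 0 := by
  rw [inner_E3, cross3_apply0, cross3_apply1, cross3_apply2]; ring

lemma inner_w_cross3 (u w : E3) : (inner ℝ w (cross3 u w) : ℝ) = 0 := by
  rw [inner_E3, cross3_apply0, cross3_apply1, cross3_apply2]; ring

lemma rot_pow (p u w : E3) (α : ℝ) (r : E3 ≃ᵢ E3) (hu : ‖u‖ = 1)
    (hw : (inner ℝ u w : ℝ) = 0) (hr : ∀ x, r x = rot3 p u α x) :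
    ∀ n : ℕ, (r ^ n) (p + w)
      = p + (Real.cos (n * α) • w + Real.sin (n * α) • cross3 u w) := by
  intro n
  induction n with
  | zero => simp
  | succ m ih =>
      have hstep : (r ^ (m+1)) (p + w) = r ((r ^ m) (p + w)) := by
        rw [pow_succ']; rfl
      rw [hstep, ih, hr]
      set c := Real.cos (m * α)
      set s := Real.sin (m * α)
      set y : E3 := c • w + s • cross3 u w with hy
      have hsub : p + y - p = y := by abel
      have hinncy : (inner ℝ u y : ℝ) = 0 := by
        rw [hy, inner_add_right, real_inner_smul_right, real_inner_smul_right, hw,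
          inner_u_cross3]
        ring
      have hcy : cross3 u y = c • cross3 u w + s • (-w) := by
        rw [hy, cross3_lin, cross3_cross3 u w hu hw]
      rw [rot3, hsub, hinncy, hcy]
      have hc1 : Real.cos ((m+1 : ℕ) * α) = Real.cos α * c - Real.sin α * s := by
        push_cast; rw [show ((m:ℝ)+1)*α = (m:ℝ)*α + α by ring, Real.cos_add]; ring
      have hs1 : Real.sin ((m+1 : ℕ) * α) = Real.sin α * c + Real.cos α * s := by
        push_cast; rw [show ((m:ℝ)+1)*α = (m:ℝ)*α + α by ring, Real.sin_add]; ring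
      rw [hc1, hs1, hy]
      module

/-- For `θ = arccos (1/3)` (the dihedral angle of a regular tetrahedron), the
supplement `π - θ` is an irrational multiple of `π`, and hence every rotation of `ℝ³`
about any line through the angle `π - θ` has infinite order. -/
theorem stmt_7 :
    Irrational ((π - Real.arccos (1 / 3)) / π) ∧
    ∀ (p u : E3) (r : E3 ≃ᵢ E3), ‖u‖ = 1 →
      (∀ x, r x = rot3 p u (π - Real.arccos (1 / 3)) x) → ¬ IsOfFinOrder r := by
  have hirr : Irrational ((π - Real.arccos (1 / 3)) / π) := by
    have := irr_main
    norm_num at this ⊢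
    convert this using 3
  refine ⟨hirr, ?_⟩
  intro p u r hu hr hfin
  set α := π - Real.arccos (1 / 3) with hα
  obtain ⟨n, hn, hrn⟩ := isOfFinOrder_iff_pow_eq_one.mp hfin
  have hu0 : u ≠ 0 := by intro h; rw [h] at hu; simp at hu
  obtain ⟨w, hwmem, hw0⟩ : ∃ w : E3, w ∈ (ℝ ∙ u)ᗮ ∧ w ≠ 0 := by
    apply Submodule.exists_mem_ne_zero_of_ne_bot
    intro hbot
    have h1 : Module.finrank ℝ (ℝ ∙ u) = 1 := finrank_span_singleton hu0
    have h2 := Submodule.finrank_add_finrank_orthogonal (K := (ℝ ∙ u))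
    rw [hbot, h1] at h2
    simp [finrank_euclideanSpace_fin] at h2
  have hw : (inner ℝ u w : ℝ) = 0 :=
    (Submodule.mem_orthogonal _ _).1 hwmem u (Submodule.mem_span_singleton_self u)
  have key := rot_pow p u w α r hu hw hr n
  rw [hrn] at key
  simp only [IsometryEquiv.coe_one, id_eq] at key
  have hweq : w = Real.cos (n * α) • w + Real.sin (n * α) • cross3 u w :=
    add_left_cancel key
  have hin := congrArg (fun y : E3 => (inner ℝ w y : ℝ)) hweq
  simp only [inner_add_right, real_inner_smul_right, inner_w_cross3, mul_zero, add_zero] at hin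
  have hww : (inner ℝ w w : ℝ) ≠ 0 := inner_self_ne_zero.mpr hw0
  have hcos1 : Real.cos (n * α) = 1 := by
    have : (1 - Real.cos (n * α)) * (inner ℝ w w : ℝ) = 0 := by linarith [hin]
    rcases mul_eq_zero.1 this with h | h
    · linarith
    · exact absurd h hww
  obtain ⟨k, hk⟩ := (Real.cos_eq_one_iff _).1 hcos1
  have hn0 : (n : ℝ) ≠ 0 := Nat.cast_ne_zero.2 hn.ne'
  apply hirr
  refine ⟨(2 * k / n : ℚ), ?_⟩
  rw [hα]
  push_cast
  rw [div_eq_div_iff hn0 Real.pi_ne_zero]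
  linear_combination hk
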